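/- arXiv:1908.08394 — 8 statements merged into one kernel-verified Lean document; each statement's English description precedes it below -/
import Mathlib

section
/- For all real x ≥ 0 and integers j ≥ 2, it holds that 1 - (j-1)/(x + j/2) ≤ (x/(x+1))^(j-1). -/
lemma auxA (x : ℝ) (hx : 0 ≤ x) (n : ℕ) :
    x ^ n * (x + n + 1) ≤ (x + 1) ^ (n + 1) := by
  induction n with
  | zero => simp
  | succ n ih =>
    have h1 : x ^ n * (x + n + 1) * (x + 1) ≤ (x + 1) ^ (n + 1) * (x + 1) := by
      apply mul_le_mul_of_nonneg_right ih (by linarith)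
    have hxp : 0 ≤ x ^ n := pow_nonneg hx n
    have h2 : x ^ (n + 1) * (x + (n + 1 : ℕ) + 1) ≤ x ^ n * (x + n + 1) * (x + 1) := by
      push_cast
      rw [pow_succ]
      nlinarith [mul_nonneg hxp (Nat.cast_nonneg n : (0:ℝ) ≤ n)]
    calc x ^ (n + 1) * (x + (n + 1 : ℕ) + 1) ≤ (x + 1) ^ (n + 1) * (x + 1) :=
          le_trans h2 h1
      _ = (x + 1) ^ (n + 1 + 1) := by ring

lemma auxB (x : ℝ) (hx : 0 ≤ x) (n : ℕ) :
    (2 * x + 1 - n) * (x + 1) ^ n ≤ x ^ n * (2 * x + n + 1) := by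
  induction n with
  | zero => simp
  | succ n ih =>
    have h1 : (2 * x + 1 - n) * (x + 1) ^ n * (x + 1) ≤ x ^ n * (2 * x + n + 1) * (x + 1) := by
      apply mul_le_mul_of_nonneg_right ih (by linarith)
    have hA := auxA x hx n
    rw [pow_succ] at hA
    push_cast
    rw [pow_succ, pow_succ]
    nlinarith [pow_nonneg hx n, pow_nonneg (by linarith : (0:ℝ) ≤ x + 1) n]

theorem stmt_0 (x : ℝ) (hx : 0 ≤ x) (j : ℕ) (hj : 2 ≤ j) :
    1 - ((j : ℝ) - 1) / (x + (j : ℝ) / 2) ≤ (x / (x + 1)) ^ (j - 1) := by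
  obtain ⟨n, rfl⟩ : ∃ n, j = n + 1 := ⟨j - 1, by omega⟩
  have hn : 1 ≤ n := by omega
  have hd : 0 < x + ((n : ℝ) + 1) / 2 := by
    have : (0:ℝ) ≤ n := Nat.cast_nonneg n
    linarith
  have hx1 : (0:ℝ) < x + 1 := by linarith
  have hp : (0:ℝ) < (x + 1) ^ n := pow_pos hx1 n
  have hB := auxB x hx n
  have hcast : ((n + 1 : ℕ) : ℝ) = (n : ℝ) + 1 := by push_cast; ring
  rw [hcast]
  have e1 : 1 - ((n : ℝ) + 1 - 1) / (x + ((n : ℝ) + 1) / 2)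
      = (x + ((n : ℝ) + 1) / 2 - (n : ℝ)) / (x + ((n : ℝ) + 1) / 2) := by
    field_simp
    ring
  rw [e1, show n + 1 - 1 = n from rfl, div_pow, div_le_div_iff₀ hd hp]
  nlinarith [hB]
end

section
/- Let X1 ~ Geo(p1), X2 ~ Geo(p2), and Y1, Y2 ~ Geo((p1+p2)/2) be independent geometric random variables with 0 < p1 ≤ p2 ≤ 1. Then for any positive integer j, P(X1 + X2 > j) ≥ P(Y1 + Y2 > j). -/
open MeasureTheory ProbabilityTheory

open Finset in
private lemma lemA' (a b : ℝ) (ha : 0 ≤ a) (hb : 0 ≤ b) (n : ℕ) :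
    ((a + b) / 2) ^ n ≤ (a ^ n + b ^ n) / 2 := by
  have h := (convexOn_pow (𝕜 := ℝ) n).2 (Set.mem_Ici.2 ha) (Set.mem_Ici.2 hb)
    (by norm_num : (0:ℝ) ≤ 1/2) (by norm_num : (0:ℝ) ≤ 1/2) (by norm_num)
  simp only [smul_eq_mul] at h
  have e : (1/2 : ℝ) * a + 1/2 * b = (a + b) / 2 := by ring
  rw [e] at h
  linarith

open Finset in
private lemma lemB' (a b : ℝ) (hb : 0 ≤ b) (hba : b ≤ a) (n : ℕ) :
    (n : ℝ) * ((a + b) / 2) ^ (n - 1) ≤ ∑ m ∈ range n, a ^ m * b ^ (n - 1 - m) := by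
  induction n with
  | zero => simp
  | succ n ih =>
    have hq : (0:ℝ) ≤ (a + b) / 2 := by linarith
    have hsplit : ∀ m ∈ range n, a ^ m * b ^ (n - m) = b * (a ^ m * b ^ (n - 1 - m)) := by
      intro m hm
      have h := Finset.mem_range.1 hm
      rw [show n - m = (n - 1 - m) + 1 by omega, pow_succ]; ring
    have hsplit2 : ∀ m ∈ range n,
        a ^ (m + 1) * b ^ (n - (m + 1)) = a * (a ^ m * b ^ (n - 1 - m)) := by
      intro m hm
      rw [show n - (m + 1) = n - 1 - m by omega, pow_succ]; ring
    have h1 : ∑ m ∈ range (n + 1), a ^ m * b ^ (n - m)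
        = a ^ n + b * ∑ m ∈ range n, a ^ m * b ^ (n - 1 - m) := by
      rw [Finset.sum_range_succ, Finset.sum_congr rfl hsplit, ← Finset.mul_sum,
        Nat.sub_self, pow_zero, mul_one]
      ring
    have h2 : ∑ m ∈ range (n + 1), a ^ m * b ^ (n - m)
        = b ^ n + a * ∑ m ∈ range n, a ^ m * b ^ (n - 1 - m) := by
      rw [Finset.sum_range_succ', Finset.sum_congr rfl hsplit2, ← Finset.mul_sum]
      simp only [pow_zero, Nat.sub_zero, one_mul]
      ring
    rcases Nat.eq_zero_or_pos n with hn | hn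
    · subst hn; simp
    · have hpow : ((a + b) / 2) * ((a + b) / 2) ^ (n - 1) = ((a + b) / 2) ^ n := by
        rw [← pow_succ']; congr 1; omega
      have hqS : (n : ℝ) * ((a + b) / 2) ^ n
          ≤ ((a + b) / 2) * ∑ m ∈ range n, a ^ m * b ^ (n - 1 - m) := by
        calc (n : ℝ) * ((a + b) / 2) ^ n
            = ((a + b) / 2) * ((n : ℝ) * ((a + b) / 2) ^ (n - 1)) := by
              rw [← hpow]; ring
          _ ≤ _ := mul_le_mul_of_nonneg_left ih hq
      have hA := lemA' a b (le_trans hb hba) hb n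
      simp only [Nat.add_sub_cancel]
      push_cast
      linarith

open Finset in
private lemma lemSqq (q : ℝ) (j : ℕ) :
    ∑ m ∈ range j, q ^ m * q ^ (j - 1 - m) = (j : ℝ) * q ^ (j - 1) := by
  rw [Finset.sum_congr rfl (fun m hm => ?_)]
  · rw [Finset.sum_const, Finset.card_range, nsmul_eq_mul]
  · rw [← pow_add]
    congr 1
    have := Finset.mem_range.1 hm; omega

open Finset in
private lemma keyIneq (a b : ℝ) (hb : 0 ≤ b) (hba : b ≤ a) (ha1 : a ≤ 1) (j : ℕ) :
    ((a + b) / 2) ^ j + (1 - (a + b) / 2) * ((j : ℝ) * ((a + b) / 2) ^ (j - 1))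
      ≤ a ^ j + (1 - a) * ∑ m ∈ range j, a ^ m * b ^ (j - 1 - m) := by
  have hS := geom_sum₂_mul a b j
  have hA := lemA' a b (le_trans hb hba) hb j
  have hB := lemB' a b hb hba j
  have h2 : (1 - (a + b) / 2) * ((j : ℝ) * ((a + b) / 2) ^ (j - 1))
      ≤ (1 - (a + b) / 2) * ∑ m ∈ range j, a ^ m * b ^ (j - 1 - m) :=
    mul_le_mul_of_nonneg_left hB (by linarith)
  nlinarith [hS, hA, h2]

open Finset in
private lemma innerSum (r : ℝ) (m : ℕ) :
    ∑ l ∈ range (m + 1), (if l = 0 then (0:ℝ) else (1 - r) ^ (l - 1) * r)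
      = 1 - (1 - r) ^ m := by
  rw [Finset.sum_range_succ']
  simp only [Nat.add_sub_cancel, Nat.add_eq_zero, one_ne_zero, and_false, if_false]
  rw [if_pos trivial, add_zero, ← Finset.sum_mul]
  linear_combination (-1 : ℝ) * geom_sum_mul (1 - r) m

open Finset in
private lemma Dclosed (p r : ℝ) (j : ℕ) :
    ∑ k ∈ range (j + 1),
        (if k = 0 then (0:ℝ) else (1 - p) ^ (k - 1) * p)
          * ∑ l ∈ range (j - k + 1), (if l = 0 then (0:ℝ) else (1 - r) ^ (l - 1) * r)
      = 1 - (1 - p) ^ j - p * ∑ m ∈ range j, (1 - p) ^ m * (1 - r) ^ (j - 1 - m) := by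
  have hin : ∀ k ∈ range (j + 1), (if k = 0 then (0:ℝ) else (1 - p) ^ (k - 1) * p)
      * ∑ l ∈ range (j - k + 1), (if l = 0 then (0:ℝ) else (1 - r) ^ (l - 1) * r)
      = (if k = 0 then (0:ℝ) else (1 - p) ^ (k - 1) * p) * (1 - (1 - r) ^ (j - k)) :=
    fun k _ => by rw [innerSum]
  rw [Finset.sum_congr rfl hin, Finset.sum_range_succ']
  have hterm : ∀ i ∈ range j,
      (if i + 1 = 0 then (0:ℝ) else (1 - p) ^ (i + 1 - 1) * p) * (1 - (1 - r) ^ (j - (i + 1)))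
        = p * (1 - p) ^ i - p * ((1 - p) ^ i * (1 - r) ^ (j - 1 - i)) := by
    intro i _
    rw [if_neg (by omega), show i + 1 - 1 = i from rfl, show j - (i + 1) = j - 1 - i by omega]
    ring
  rw [Finset.sum_congr rfl hterm, Finset.sum_sub_distrib, ← Finset.mul_sum, ← Finset.mul_sum]
  have hg : p * ∑ i ∈ range j, (1 - p) ^ i = 1 - (1 - p) ^ j := by
    linear_combination (-1 : ℝ) * geom_sum_mul (1 - p) j
  rw [hg, if_pos rfl, zero_mul, add_zero]

open Finset in
private lemma cdf_sum {Ω : Type*} [MeasureSpace Ω] (X : Ω → ℕ) (hX : Measurable X) (m : ℕ) :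
    ℙ {ω | X ω ≤ m} = ∑ k ∈ range (m + 1), ℙ {ω | X ω = k} := by
  have hset : {ω | X ω ≤ m} = ⋃ k ∈ range (m + 1), {ω | X ω = k} := by
    ext ω
    simp only [Set.mem_setOf_eq, Set.mem_iUnion, Finset.mem_range]
    exact ⟨fun h => ⟨X ω, by omega, rfl⟩, fun ⟨k, hk, he⟩ => by omega⟩
  rw [hset]
  refine measure_biUnion_finset ?_ (fun k _ => hX (measurableSet_singleton k))
  intro i _ k _ hik
  refine Set.disjoint_left.mpr fun ω h1 h2 => hik ?_
  simp only [Set.mem_setOf_eq] at h1 h2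
  omega

open Finset in
private lemma tail_toReal {Ω : Type*} [MeasureSpace Ω] [IsProbabilityMeasure (ℙ : Measure Ω)]
    (X Y : Ω → ℕ) (hX : Measurable X) (hY : Measurable Y)
    (hind : IndepFun X Y ℙ) (j : ℕ) :
    (ℙ {ω | j < X ω + Y ω}).toReal
      = 1 - ∑ k ∈ range (j + 1), (ℙ {ω | X ω = k}).toReal
          * ∑ l ∈ range (j - k + 1), (ℙ {ω | Y ω = l}).toReal := by
  have hset : {ω | j < X ω + Y ω} = {ω | X ω + Y ω ≤ j}ᶜ := by
    ext ω; simp [not_le]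
  have hdecomp : {ω | X ω + Y ω ≤ j}
      = ⋃ k ∈ range (j + 1), ({ω | X ω = k} ∩ {ω | Y ω ≤ j - k}) := by
    ext ω
    simp only [Set.mem_setOf_eq, Set.mem_iUnion, Set.mem_inter_iff, Finset.mem_range]
    constructor
    · intro h; exact ⟨X ω, by omega, rfl, by omega⟩
    · rintro ⟨k, hk, rfl, h⟩; omega
  have hmeas : ∀ k : ℕ, MeasurableSet ({ω | X ω = k} ∩ {ω | Y ω ≤ j - k}) := fun k =>
    (hX (measurableSet_singleton k)).inter (hY (measurableSet_Iic (a := j - k)))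
  have hXYle : ℙ {ω | X ω + Y ω ≤ j}
      = ∑ k ∈ range (j + 1), ℙ {ω | X ω = k} * ℙ {ω | Y ω ≤ j - k} := by
    rw [hdecomp, measure_biUnion_finset ?_ (fun k _ => hmeas k)]
    · refine Finset.sum_congr rfl fun k _ => ?_
      have : {ω | X ω = k} ∩ {ω | Y ω ≤ j - k}
          = X ⁻¹' {k} ∩ Y ⁻¹' (Set.Iic (j - k)) := rfl
      rw [this, hind.measure_inter_preimage_eq_mul _ _ (measurableSet_singleton k)
        measurableSet_Iic]
      rfl
    · intro i _ k _ hik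
      refine Set.disjoint_left.mpr fun ω h1 h2 => hik ?_
      simp only [Set.mem_inter_iff, Set.mem_setOf_eq] at h1 h2
      omega
  have hmle : MeasurableSet {ω | X ω + Y ω ≤ j} := by
    rw [hdecomp]
    exact (range (j + 1)).measurableSet_biUnion fun k _ => hmeas k
  rw [hset, prob_compl_eq_one_sub hmle,
    ENNReal.toReal_sub_of_le prob_le_one (by simp),
    ENNReal.toReal_one, hXYle, ENNReal.toReal_sum (fun k _ => ENNReal.mul_ne_top
      (measure_ne_top _ _) (measure_ne_top _ _))]
  congr 1
  refine Finset.sum_congr rfl fun k _ => ?_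
  rw [ENNReal.toReal_mul, cdf_sum Y hY (j - k),
    ENNReal.toReal_sum (fun l _ => measure_ne_top _ _)]

theorem stmt_2 {Ω : Type*} [MeasureSpace Ω] [IsProbabilityMeasure (ℙ : Measure Ω)]
    (X1 X2 Y1 Y2 : Ω → ℕ)
    (hX1m : Measurable X1) (hX2m : Measurable X2)
    (hY1m : Measurable Y1) (hY2m : Measurable Y2)
    (p1 p2 : ℝ) (hp1 : 0 < p1) (h12 : p1 ≤ p2) (hp2 : p2 ≤ 1)
    (hlaw1 : ∀ k : ℕ, (ℙ {ω | X1 ω = k}).toReal =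
      if k = 0 then 0 else (1 - p1) ^ (k - 1) * p1)
    (hlaw2 : ∀ k : ℕ, (ℙ {ω | X2 ω = k}).toReal =
      if k = 0 then 0 else (1 - p2) ^ (k - 1) * p2)
    (hlawY1 : ∀ k : ℕ, (ℙ {ω | Y1 ω = k}).toReal =
      if k = 0 then 0 else (1 - (p1 + p2) / 2) ^ (k - 1) * ((p1 + p2) / 2))
    (hlawY2 : ∀ k : ℕ, (ℙ {ω | Y2 ω = k}).toReal =
      if k = 0 then 0 else (1 - (p1 + p2) / 2) ^ (k - 1) * ((p1 + p2) / 2))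
    (hindep : iIndepFun ![X1, X2, Y1, Y2] ℙ)
    (j : ℕ) (hj : 1 ≤ j) :
    ℙ {ω | j < Y1 ω + Y2 ω} ≤ ℙ {ω | j < X1 ω + X2 ω} := by
  have hiX : IndepFun X1 X2 ℙ := by
    have h := hindep.indepFun (show (0 : Fin 4) ≠ 1 by decide)
    simpa using h
  have hiY : IndepFun Y1 Y2 ℙ := by
    have h := hindep.indepFun (show (2 : Fin 4) ≠ 3 by decide)
    simpa using h
  refine (ENNReal.toReal_le_toReal (measure_ne_top _ _) (measure_ne_top _ _)).mp ?_
  rw [tail_toReal Y1 Y2 hY1m hY2m hiY j, tail_toReal X1 X2 hX1m hX2m hiX j]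
  have hsX : ∑ k ∈ Finset.range (j + 1), (ℙ {ω | X1 ω = k}).toReal
        * ∑ l ∈ Finset.range (j - k + 1), (ℙ {ω | X2 ω = l}).toReal
      = 1 - (1 - p1) ^ j - p1 * ∑ m ∈ Finset.range j, (1 - p1) ^ m * (1 - p2) ^ (j - 1 - m) := by
    rw [← Dclosed p1 p2 j]
    refine Finset.sum_congr rfl fun k _ => ?_
    rw [hlaw1 k]
    congr 1
    exact Finset.sum_congr rfl fun l _ => hlaw2 l
  have hsY : ∑ k ∈ Finset.range (j + 1), (ℙ {ω | Y1 ω = k}).toReal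
        * ∑ l ∈ Finset.range (j - k + 1), (ℙ {ω | Y2 ω = l}).toReal
      = 1 - (1 - (p1 + p2) / 2) ^ j - ((p1 + p2) / 2)
          * ∑ m ∈ Finset.range j,
              (1 - (p1 + p2) / 2) ^ m * (1 - (p1 + p2) / 2) ^ (j - 1 - m) := by
    rw [← Dclosed ((p1 + p2) / 2) ((p1 + p2) / 2) j]
    refine Finset.sum_congr rfl fun k _ => ?_
    rw [hlawY1 k]
    congr 1
    exact Finset.sum_congr rfl fun l _ => hlawY2 l
  rw [hsX, hsY, lemSqq (1 - (p1 + p2) / 2) j]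
  have key := keyIneq (1 - p1) (1 - p2) (by linarith) (by linarith) (by linarith) j
  rw [show (1 - p1 + (1 - p2)) / 2 = 1 - (p1 + p2) / 2 from by ring] at key
  nlinarith [key]
end

section
/- Let X1, ..., Xm be independent geometric random variables where Xi has success probability pi ∈ (0,1]. Then P(Σ_{i=1}^m X_i > m²/(4·Σ_{i=1}^m p_i)) ≥ 1 - 16/(9m). -/
open MeasureTheory ProbabilityTheory Real

lemma geom_mgf {Ω : Type*} [MeasureSpace Ω] [IsProbabilityMeasure (ℙ : Measure Ω)]
    (X : Ω → ℕ) (hX : Measurable X) (p : ℝ) (hp : 0 < p) (hp' : p ≤ 1)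
    (hlaw : ∀ k, (ℙ {ω | X ω = k}).toReal = if k = 0 then 0 else (1 - p) ^ (k - 1) * p)
    (s : ℝ) (hs : 0 < s) :
    mgf (fun ω => (X ω : ℝ)) ℙ (-s) = p * exp (-s) / (1 - (1 - p) * exp (-s)) := by
  have he1 : exp (-s) ≤ 1 := exp_le_one_iff.mpr (by linarith)
  have hx0 : (0:ℝ) ≤ (1 - p) * exp (-s) := mul_nonneg (by linarith) (exp_pos _).le
  have hx1 : (1 - p) * exp (-s) < 1 := by nlinarith [exp_pos (-s)]
  have hν : Measure.map X ℙ Set.univ = 1 := by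
    simp [Measure.map_apply hX MeasurableSet.univ]
  haveI : IsProbabilityMeasure (Measure.map X ℙ) := ⟨hν⟩
  have hint : Integrable (fun k : ℕ => exp (-s * k)) (Measure.map X ℙ) := by
    refine (integrable_const (1:ℝ)).mono' (measurable_from_top.aestronglyMeasurable) ?_
    refine Filter.Eventually.of_forall fun k => ?_
    rw [norm_of_nonneg (exp_pos _).le]
    exact exp_le_one_iff.mpr
      (mul_nonpos_of_nonpos_of_nonneg (by linarith) (Nat.cast_nonneg k))
  have hmap : mgf (fun ω => (X ω : ℝ)) ℙ (-s) = ∫ k : ℕ, exp (-s * k) ∂(Measure.map X ℙ) := by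
    rw [mgf, integral_map hX.aemeasurable measurable_from_top.aestronglyMeasurable]
  rw [hmap, integral_countable' hint]
  have hsingle : ∀ k : ℕ, ((Measure.map X ℙ) {k}).toReal =
      if k = 0 then 0 else (1 - p) ^ (k - 1) * p := by
    intro k
    rw [Measure.map_apply hX (measurableSet_singleton k), ← hlaw k]
    congr 1
  have hsummand : ∀ k : ℕ, ((Measure.map X ℙ) {k}).toReal • exp (-s * k) =
      (if k = 0 then 0 else (1 - p) ^ (k - 1) * p * exp (-s * k)) := by
    intro k
    rw [hsingle k]
    split <;> simp [mul_assoc]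
  simp_rw [measureReal_def, hsummand]
  have hexpand : ∀ j : ℕ, exp (-s * ((j:ℝ) + 1)) = exp (-s) ^ j * exp (-s) := by
    intro j
    rw [show (-s * ((j:ℝ)+1)) = (j:ℝ) * (-s) + (-s) by ring, exp_add, exp_nat_mul]
  have hsum2 : Summable (fun j : ℕ =>
      (if (j+1) = 0 then 0 else (1 - p) ^ ((j+1) - 1) * p * exp (-s * ((j:ℕ)+1:ℕ)))) := by
    simp only [Nat.add_sub_cancel, Nat.succ_ne_zero, if_false]
    refine Summable.of_nonneg_of_le (fun j => mul_nonneg (mul_nonneg (pow_nonneg (by linarith) j) hp.le) (exp_pos _).le)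
      (fun j => ?_) (summable_geometric_of_lt_one hx0 hx1)
    push_cast
    rw [hexpand j, mul_pow]
    calc (1 - p) ^ j * p * (exp (-s) ^ j * exp (-s))
        = ((1 - p) ^ j * exp (-s) ^ j) * (p * exp (-s)) := by ring
      _ ≤ ((1 - p) ^ j * exp (-s) ^ j) * 1 := by
          refine mul_le_mul_of_nonneg_left ?_ (mul_nonneg (pow_nonneg (by linarith) j) (pow_nonneg (exp_pos _).le j))
          nlinarith [exp_pos (-s)]
      _ = (1 - p) ^ j * exp (-s) ^ j := by ring
  have hsum : Summable (fun k : ℕ =>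
      (if k = 0 then 0 else (1 - p) ^ (k - 1) * p * exp (-s * k))) :=
    (summable_nat_add_iff 1).mp hsum2
  rw [Summable.tsum_eq_zero_add hsum]
  simp only [if_pos rfl, if_true, zero_add, Nat.succ_ne_zero, if_false, Nat.add_sub_cancel]
  have key : ∀ j : ℕ, (1 - p) ^ j * p * exp (-s * ((j:ℕ)+1:ℕ)) =
      p * exp (-s) * ((1 - p) * exp (-s)) ^ j := by
    intro j
    push_cast
    rw [hexpand j, mul_pow]
    ring
  simp_rw [key]
  rw [tsum_mul_left, tsum_geometric_of_lt_one hx0 hx1]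
  field_simp

theorem stmt_4 {Ω : Type*} [MeasureSpace Ω] [IsProbabilityMeasure (ℙ : Measure Ω)]
    (m : ℕ) (hm : 1 ≤ m) (X : Fin m → Ω → ℕ) (hXm : ∀ i, Measurable (X i))
    (p : Fin m → ℝ) (hp : ∀ i, 0 < p i) (hp' : ∀ i, p i ≤ 1)
    (hlaw : ∀ (i : Fin m) (k : ℕ), (ℙ {ω | X i ω = k}).toReal =
      if k = 0 then 0 else (1 - p i) ^ (k - 1) * p i)
    (hindep : iIndepFun X ℙ) :
    1 - 16 / (9 * (m : ℝ)) ≤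
      (ℙ {ω | (m : ℝ) ^ 2 / (4 * ∑ i, p i) < ((∑ i, X i ω : ℕ) : ℝ)}).toReal := by
  classical
  have hm' : (0:ℝ) < m := by exact_mod_cast Nat.lt_of_lt_of_le Nat.zero_lt_one hm
  have hsum_pos : 0 < ∑ i, p i :=
    Finset.sum_pos (fun i _ => hp i) ⟨⟨0, hm⟩, Finset.mem_univ _⟩
  set q : ℝ := (∑ i, p i) / m with hq_def
  have hq : 0 < q := div_pos hsum_pos hm'
  have hmq : (m:ℝ) * q = ∑ i, p i := by rw [hq_def]; field_simp
  set ε : ℝ := (m:ℝ)^2 / (4 * ∑ i, p i) with hε_def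
  set Y : Fin m → Ω → ℝ := fun i ω => (X i ω : ℝ) with hY_def
  have hYm : ∀ i, Measurable (Y i) := fun i => measurable_from_top.comp (hXm i)
  have hYindep : iIndepFun Y ℙ :=
    hindep.comp (fun _ (n : ℕ) => (n : ℝ)) (fun _ => measurable_from_top)
  have hmgf_le : ∀ i, mgf (Y i) ℙ (-q) ≤ p i / (p i + q) := by
    intro i
    rw [geom_mgf (X i) (hXm i) (p i) (hp i) (hp' i) (hlaw i) q hq]
    have hpi := hp i
    have hpi' := hp' i
    have he1 : exp (-q) ≤ 1 := exp_le_one_iff.mpr (by linarith)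
    have h1 : 0 < 1 - (1 - p i) * exp (-q) := by nlinarith [exp_pos (-q)]
    rw [div_le_div_iff₀ h1 (by positivity)]
    have hmul : exp (-q) * exp q = 1 := by rw [← exp_add]; simp
    have hexpq := add_one_le_exp q
    have h5 : exp (-q) * (q + 1) ≤ 1 := by
      nlinarith [mul_le_mul_of_nonneg_left hexpq (exp_pos (-q)).le]
    nlinarith [exp_pos (-q)]
  -- sum S and Chernoff
  have hSapp : ∀ ω, (∑ i, Y i) ω = ∑ i, Y i ω := fun ω => Finset.sum_apply ω Finset.univ Y
  have hS_meas : Measurable (∑ i, Y i) := by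
    have : (∑ i, Y i) = fun ω => ∑ i, Y i ω := funext hSapp
    rw [this]
    exact Finset.measurable_sum _ fun i _ => hYm i
  have hSnn : ∀ ω, 0 ≤ (∑ i, Y i) ω := by
    intro ω
    rw [Finset.sum_apply]
    exact Finset.sum_nonneg fun i _ => by simp [hY_def]
  have hint : Integrable (fun ω => exp (-q * (∑ i, Y i) ω)) ℙ := by
    refine (integrable_const (1:ℝ)).mono'
      ((hS_meas.const_mul (-q)).exp.aestronglyMeasurable) ?_
    refine Filter.Eventually.of_forall fun ω => ?_
    rw [norm_of_nonneg (exp_pos _).le]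
    exact exp_le_one_iff.mpr (mul_nonpos_of_nonpos_of_nonneg (by linarith) (hSnn ω))
  have hcher := measure_le_le_exp_mul_mgf (μ := ℙ) (X := ∑ i, Y i) ε
    (neg_nonpos.mpr hq.le) hint
  rw [hYindep.mgf_sum hYm Finset.univ, neg_neg] at hcher
  -- product bound
  have hprod : ∏ i, mgf (Y i) ℙ (-q) ≤ exp (-((m:ℝ)/2)) := by
    have h1 : ∏ i, mgf (Y i) ℙ (-q) ≤ ∏ i, exp (-(q/(p i + q))) := by
      refine Finset.prod_le_prod (fun i _ => mgf_nonneg) (fun i _ => ?_)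
      refine (hmgf_le i).trans ?_
      have hpi := hp i
      have h2 := add_one_le_exp (-(q/(p i + q)))
      have h3 : p i / (p i + q) = 1 - q/(p i + q) := by field_simp; ring
      linarith [h3 ▸ le_refl (p i / (p i + q))]
    refine h1.trans ?_
    rw [← Real.exp_sum]
    apply exp_le_exp.mpr
    have hsed := Finset.sq_sum_div_le_sum_sq_div Finset.univ (fun _ : Fin m => (1:ℝ))
      (g := fun i => p i + q) (fun i _ => add_pos (hp i) hq)
    simp only [Finset.sum_const, Finset.card_univ, Fintype.card_fin, one_pow, nsmul_eq_mul,
      mul_one] at hsed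
    have hgsum : ∑ i, (p i + q) = 2 * ((m:ℝ) * q) := by
      rw [Finset.sum_add_distrib, Finset.sum_const, Finset.card_univ, Fintype.card_fin,
        nsmul_eq_mul, hmq]
      ring
    rw [hgsum, hmq] at hsed
    -- hsed : (m:ℝ)^2 / (2 * (∑ p)) ≤ ∑ i, 1/(p i + q)  (roughly)
    have hkey : (m:ℝ)/2 ≤ ∑ i, q/(p i + q) := by
      have : ∑ i, q/(p i + q) = q * ∑ i, 1/(p i + q) := by
        rw [Finset.mul_sum]
        congr 1
        ext i
        ring
      rw [this]
      have h4 : (m:ℝ)^2 / (2 * ((m:ℝ)*q)) = m/(2*q) := by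
        field_simp
      rw [hmq] at h4
      calc (m:ℝ)/2 = q * ((m:ℝ)/(2*q)) := by field_simp
        _ ≤ q * ∑ i, 1/(p i + q) := by
            refine mul_le_mul_of_nonneg_left ?_ hq.le
            rw [← h4]
            exact hsed
    rw [Finset.sum_neg_distrib]
    linarith
  -- combine
  have hqε : q * ε = (m:ℝ)/4 := by
    rw [hε_def, ← hmq]
    field_simp
  have hbound : (ℙ {ω | (∑ i, Y i) ω ≤ ε}).toReal ≤ 16 / (9 * (m:ℝ)) := by
    refine hcher.trans ?_
    calc exp (q * ε) * ∏ i, mgf (Y i) ℙ (-q)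
        ≤ exp (q * ε) * exp (-((m:ℝ)/2)) := by
          exact mul_le_mul_of_nonneg_left hprod (exp_pos _).le
      _ = exp (-((m:ℝ)/4)) := by rw [← exp_add, hqε]; ring_nf
      _ ≤ 16 / (9 * (m:ℝ)) := by
          have hu : 1 + (m:ℝ)/12 ≤ exp ((m:ℝ)/12) := by
            linarith [add_one_le_exp ((m:ℝ)/12)]
          have hcube : exp ((m:ℝ)/4) = exp ((m:ℝ)/12) ^ 3 := by
            rw [← exp_nat_mul]
            congr 1
            push_cast
            ring
          have h9 : 9 * (m:ℝ) ≤ 16 * exp ((m:ℝ)/4) := by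
            rw [hcube]
            nlinarith [sq_nonneg ((m:ℝ) - 6), hm', pow_le_pow_left₀ (by positivity : (0:ℝ) ≤ 1 + (m:ℝ)/12) hu 3]
          have hmul2 : exp (-((m:ℝ)/4)) * exp ((m:ℝ)/4) = 1 := by
            rw [← exp_add]; simp
          rw [le_div_iff₀ (by positivity)]
          nlinarith [exp_pos (-((m:ℝ)/4)), mul_le_mul_of_nonneg_left h9 (exp_pos (-((m:ℝ)/4))).le]
  have hset : {ω | ε < ((∑ i, X i ω : ℕ):ℝ)} = {ω | (∑ i, Y i) ω ≤ ε}ᶜ := by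
    ext ω
    simp only [Set.mem_compl_iff, Set.mem_setOf_eq, not_le]
    rw [hSapp ω]
    have : (∑ i, Y i ω) = ((∑ i, X i ω : ℕ) : ℝ) := by
      simp [hY_def, Nat.cast_sum]
    rw [this]
  have hgoal : {ω | (m:ℝ)^2 / (4 * ∑ i, p i) < ((∑ i, X i ω : ℕ):ℝ)} =
      {ω | (∑ i, Y i) ω ≤ ε}ᶜ := hset
  rw [hgoal]
  have hA : MeasurableSet {ω | (∑ i, Y i) ω ≤ ε} := measurableSet_le hS_meas measurable_const
  rw [prob_compl_eq_one_sub hA, ENNReal.toReal_sub_of_le prob_le_one ENNReal.one_ne_top]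
  simp only [ENNReal.toReal_one]
  linarith [hbound]
end

section
/- Let q ∈ (0,1) and let A_k be the k×k symmetric tridiagonal matrix with diagonal entries (2 + 2nμ/(L-μ), ..., 2 + 2nμ/(L-μ), 1 + 2nμ/(L-μ)) and off-diagonal entries -1, where q is a root of z² - (2 + 2nμ/(L-μ))z + 1 = 0 and q = (α-1)/(α+1) with 2/(α+1) = 1 - q. Then the solution y of A_k y = (2ξ/(α+1))·e_k is y_j = ξ·q^(k+1)/(1+q^(2k+1)) · (q^(-j) - q^j) for j = 1, ..., k. -/
theorem stmt_9 (n : ℕ) (hn : 1 ≤ n) (L μ : ℝ) (hμ : 0 < μ) (hL : μ < L)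
    (α q ξ : ℝ) (hα : 1 < α) (hq : q = (α - 1) / (α + 1))
    (hq0 : 0 < q) (hq1 : q < 1)
    (hroot : q ^ 2 - (2 + 2 * n * μ / (L - μ)) * q + 1 = 0)
    (k : ℕ) (hk : 1 ≤ k)
    (A : Matrix (Fin k) (Fin k) ℝ)
    (hA : ∀ i j : Fin k, A i j =
      if i = j then (if i.val = k - 1 then 1 + 2 * n * μ / (L - μ) else 2 + 2 * n * μ / (L - μ))
      else if i.val + 1 = j.val ∨ j.val + 1 = i.val then -1 else 0)
    (y : Fin k → ℝ)
    (hy : ∀ j : Fin k, y j =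
      ξ * q ^ (k + 1) / (1 + q ^ (2 * k + 1)) * ((q ^ (j.val + 1))⁻¹ - q ^ (j.val + 1))) :
    A.mulVec y = fun i : Fin k => if i.val = k - 1 then 2 * ξ / (α + 1) else 0 := by
  have hqne : q ≠ 0 := ne_of_gt hq0
  have hα0 : (0:ℝ) < α + 1 := by linarith
  have hα1 : α + 1 ≠ 0 := ne_of_gt hα0
  set c : ℝ := 2 + 2 * n * μ / (L - μ) with hcdef
  have hcq : c * q = q ^ 2 + 1 := by linarith
  set K : ℝ := ξ * q ^ (k + 1) / (1 + q ^ (2 * k + 1)) with hKdef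
  set G : ℕ → ℝ := fun m => K * ((q ^ (m + 1))⁻¹ - q ^ (m + 1)) with hGdef
  have hden : (1:ℝ) + q ^ (2 * k + 1) ≠ 0 := by positivity
  have h1q : 1 - q = 2 / (α + 1) := by rw [hq]; field_simp; ring
  funext i
  set t := i.val with htdef
  have ht : t < k := i.isLt
  have key : ∀ j : Fin k, A i j * y j =
      (if t = j.val then (if t = k - 1 then c - 1 else c) * G j.val else 0)
      + (if j.val = t + 1 then -G j.val else 0)
      + (if j.val + 1 = t then -G j.val else 0) := by
    intro j
    rw [hA, hy]
    simp only [Fin.ext_iff, hGdef, ← htdef]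
    split_ifs <;> first | (exfalso; omega) | ring | (rw [hcdef]; ring)
  show ∑ j, A i j * y j = _
  rw [Finset.sum_congr rfl (fun j _ => key j)]
  rw [Finset.sum_add_distrib, Finset.sum_add_distrib]
  rw [Fin.sum_univ_eq_sum_range (fun m => if t = m then (if t = k - 1 then c - 1 else c) * G m else 0) k,
      Fin.sum_univ_eq_sum_range (fun m => if m = t + 1 then -G m else 0) k,
      Fin.sum_univ_eq_sum_range (fun m => if m + 1 = t then -G m else 0) k]
  rw [Finset.sum_ite_eq (Finset.range k) t (fun m => (if t = k - 1 then c - 1 else c) * G m)]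
  rw [Finset.sum_ite_eq' (Finset.range k) (t + 1) (fun m => -G m)]
  have hS3 : ∑ m ∈ Finset.range k, (if m + 1 = t then -G m else 0)
      = if 1 ≤ t then -G (t - 1) else 0 := by
    match hteq : t with
    | 0 => simp
    | s + 1 =>
      have : ∀ m, (m + 1 = s + 1) = (m = s) := by intro m; simp
      simp only [this]
      rw [Finset.sum_ite_eq' (Finset.range k) s (fun m => -G m)]
      have : s ∈ Finset.range k := by simp; omega
      simp [this]
  rw [hS3]
  simp only [Finset.mem_range, if_pos ht]
  have hc2 : c = (q ^ 2 + 1) / q := by field_simp; linarith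
  have hRHS : 2 * ξ / (α + 1) = ξ * (1 - q) := by rw [h1q]; ring
  by_cases h1 : t = k - 1
  · rw [if_pos h1, if_pos h1, if_neg (show ¬ t + 1 < k by omega)]
    by_cases h3 : 1 ≤ t
    · rw [if_pos h3]
      obtain ⟨s, hs⟩ : ∃ s, t = s + 1 := ⟨t - 1, by omega⟩
      have hk2 : k = s + 2 := by omega
      rw [hRHS]
      simp only [hGdef, hKdef, hc2, hs, hk2, Nat.add_sub_cancel]
      have hd : (1:ℝ) + q ^ (2 * (s + 2) + 1) ≠ 0 := by positivity
      field_simp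
      ring
    · rw [if_neg h3]
      have ht0 : t = 0 := by omega
      have hk1 : k = 1 := by omega
      rw [hRHS]
      simp only [hGdef, hKdef, hc2, ht0, hk1]
      have hd : (1:ℝ) + q ^ (2 * 1 + 1) ≠ 0 := by positivity
      field_simp
      ring
  · rw [if_neg h1, if_neg h1, if_pos (show t + 1 < k by omega)]
    by_cases h3 : 1 ≤ t
    · rw [if_pos h3]
      obtain ⟨s, hs⟩ : ∃ s, t = s + 1 := ⟨t - 1, by omega⟩
      simp only [hGdef, hKdef, hc2, hs, Nat.add_sub_cancel]
      field_simp [hqne, hden]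
      ring
    · rw [if_neg h3]
      have ht0 : t = 0 := by omega
      simp only [hGdef, hKdef, hc2, ht0]
      field_simp [hqne, hden]
      ring
end

section
/- Let L > μ > 0, n ≥ 1, and let q ∈ (0,1) satisfy q² - (2 + 2nμ/(L-μ))q + 1 = 0. For 1 ≤ k < m, the function value gap satisfies min over x with first m-k coordinates zero of F_SC(x) minus the global minimum equals Δ·q^(2k)·(1+q)/(1+q^(2k+1)), which is at least Δ·q^(2k). -/
open Finset

namespace Stmt16Aux

noncomputable def Pf (c μ ω : ℝ) (m : ℕ) (u : ℕ → ℝ) : ℝ :=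
  c*ω^2*(u 0)^2 + c*∑ i ∈ range (m-1), (u i - u (i+1))^2 + μ/2*∑ i ∈ range m, (u i)^2

noncomputable def Qf (c μ b ω : ℝ) (m : ℕ) (u : ℕ → ℝ) : ℝ :=
  Pf c μ ω m u - b * u (m-1)

noncomputable def Lf (c μ b ω : ℝ) (m : ℕ) (v w : ℕ → ℝ) : ℝ :=
  2*c*ω^2*(v 0)*(w 0) + 2*c*∑ i ∈ range (m-1), (v i - v (i+1))*(w i - w (i+1))
    + μ*∑ i ∈ range m, (v i * w i) - b * w (m-1)

lemma expandQ (c μ b ω : ℝ) (m : ℕ) (u v : ℕ → ℝ) :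
    Qf c μ b ω m u = Qf c μ b ω m v + Pf c μ ω m (fun i => u i - v i)
      + Lf c μ b ω m v (fun i => u i - v i) := by
  have e1 : ∑ i ∈ range m, (u i)^2
      = (∑ i ∈ range m, (v i)^2) + (∑ i ∈ range m, (u i - v i)^2)
        + 2*∑ i ∈ range m, (v i * (u i - v i)) := by
    rw [Finset.mul_sum, ← sum_add_distrib, ← sum_add_distrib]
    exact sum_congr rfl fun i _ => by ring
  have e2 : ∑ i ∈ range (m-1), (u i - u (i+1))^2
      = (∑ i ∈ range (m-1), (v i - v (i+1))^2)
        + (∑ i ∈ range (m-1), ((u i - v i) - (u (i+1) - v (i+1)))^2)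
        + 2*∑ i ∈ range (m-1), ((v i - v (i+1)) * ((u i - v i) - (u (i+1) - v (i+1)))) := by
    rw [Finset.mul_sum, ← sum_add_distrib, ← sum_add_distrib]
    exact sum_congr rfl fun i _ => by ring
  simp only [Qf, Pf, Lf, e1, e2]
  ring

lemma Pf_nonneg {c μ : ℝ} (ω : ℝ) (m : ℕ) (u : ℕ → ℝ) (hc : 0 ≤ c) (hμ : 0 ≤ μ) :
    0 ≤ Pf c μ ω m u := by
  unfold Pf
  have h1 : 0 ≤ c*ω^2*(u 0)^2 := by positivity
  have h2 : 0 ≤ ∑ i ∈ range (m-1), (u i - u (i+1))^2 :=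
    sum_nonneg fun i _ => sq_nonneg _
  have h3 : 0 ≤ ∑ i ∈ range m, (u i)^2 := sum_nonneg fun i _ => sq_nonneg _
  nlinarith

lemma Pf_zero (c μ ω : ℝ) (m : ℕ) (u : ℕ → ℝ) (hm : 1 ≤ m) (h : ∀ i < m, u i = 0) :
    Pf c μ ω m u = 0 := by
  unfold Pf
  rw [h 0 hm, sum_eq_zero (fun i hi => by
    rw [h i (by have := mem_range.1 hi; omega), h (i+1) (by have := mem_range.1 hi; omega)]; ring),
    sum_eq_zero (fun i hi => by rw [h i (mem_range.1 hi)]; ring)]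
  ring

lemma Qf_congr (c μ b ω : ℝ) (m : ℕ) (u v : ℕ → ℝ) (hm : 1 ≤ m) (h : ∀ i < m, u i = v i) :
    Qf c μ b ω m u = Qf c μ b ω m v := by
  unfold Qf Pf
  rw [show (∑ i ∈ range (m-1), (u i - u (i+1))^2) = ∑ i ∈ range (m-1), (v i - v (i+1))^2 from
      sum_congr rfl (fun i hi => by
        rw [h i (by have := mem_range.1 hi; omega), h (i+1) (by have := mem_range.1 hi; omega)]),
    show (∑ i ∈ range m, (u i)^2) = ∑ i ∈ range m, (v i)^2 from
      sum_congr rfl (fun i hi => by rw [h i (mem_range.1 hi)]),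
    h 0 hm, h (m-1) (by omega)]

lemma Lf_self (c μ b ω : ℝ) (m : ℕ) (a : ℕ → ℝ) :
    Lf c μ b ω m a a = 2*Pf c μ ω m a - b * a (m-1) := by
  unfold Lf Pf
  rw [sum_congr rfl (fun i (_ : i ∈ range (m-1)) => (sq (a i - a (i+1))).symm),
    sum_congr rfl (fun i (_ : i ∈ range m) => (sq (a i)).symm)]
  ring

lemma abel_sum (d w : ℕ → ℝ) (N : ℕ) :
    ∑ i ∈ range (N+1), d i * (w i - w (i+1))
      = d 0 * w 0 + (∑ i ∈ range N, (d (i+1) - d i) * w (i+1)) - d N * w (N+1) := by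
  induction N with
  | zero => simp; ring
  | succ N ih => rw [sum_range_succ, ih, sum_range_succ]; ring

lemma lin_vanish (c μ b ω : ℝ) (N : ℕ) (a w : ℕ → ℝ)
    (h0 : (2*c*ω^2*(a 0) + 2*c*(a 0 - a 1) + μ*(a 0)) * w 0 = 0)
    (hmid : ∀ i ∈ range N, (2*c*(2*a (i+1) - a i - a (i+2)) + μ * a (i+1)) * w (i+1) = 0)
    (htop : 2*c*(a (N+1) - a N) + μ*(a (N+1)) = b) :
    Lf c μ b ω (N+2) a w = 0 := by
  unfold Lf
  have hr1 : (N+2) - 1 = N+1 := rfl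
  rw [hr1]
  rw [show (∑ i ∈ range (N+1), (a i - a (i+1))*(w i - w (i+1)))
      = ∑ i ∈ range (N+1), (fun j => a j - a (j+1)) i * (w i - w (i+1)) from rfl]
  rw [abel_sum (fun j => a j - a (j+1)) w N]
  have hs : ∑ i ∈ range (N+2), (a i * w i)
      = a 0 * w 0 + (∑ i ∈ range N, a (i+1) * w (i+1)) + a (N+1) * w (N+1) := by
    rw [sum_range_succ, sum_range_succ']
    ring
  have key : 2*c*(∑ i ∈ range N, ((fun j => a j - a (j+1)) (i+1) - (fun j => a j - a (j+1)) i) * w (i+1))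
      + μ*(∑ i ∈ range N, a (i+1) * w (i+1)) = 0 := by
    rw [Finset.mul_sum, Finset.mul_sum, ← sum_add_distrib]
    refine sum_eq_zero fun i hi => ?_
    have := hmid i hi
    simp only
    linear_combination this
  rw [hs]
  simp only at key ⊢
  linear_combination h0 + key + w (N+1) * htop


noncomputable def extF (m : ℕ) (x : Fin m → ℝ) : ℕ → ℝ :=
  fun i => if h : i < m then x ⟨i, h⟩ else 0

lemma quad_form (m : ℕ) (hm : 2 ≤ m) (ω : ℝ) (A : Matrix (Fin m) (Fin m) ℝ)
    (hA : ∀ i j : Fin m, A i j =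
      if i = j then (if i.val = 0 then ω ^ 2 + 1 else if i.val = m - 1 then 1 else 2)
      else if i.val + 1 = j.val ∨ j.val + 1 = i.val then -1 else 0)
    (x : Fin m → ℝ) :
    dotProduct x (A.mulVec x)
      = ω^2*(extF m x 0)^2 + ∑ i ∈ range (m-1), (extF m x i - extF m x (i+1))^2 := by
  obtain ⟨M, rfl⟩ : ∃ M, m = M + 2 := ⟨m - 2, by omega⟩
  set X := extF (M+2) x with hX
  have hXv : ∀ (i : ℕ) (h : i < M+2), X i = x ⟨i, h⟩ := fun i h => dif_pos h
  have hX0 : ∀ (i : ℕ), ¬ i < M+2 → X i = 0 := fun i h => dif_neg h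
  have hrow : ∀ i : Fin (M+2), A.mulVec x i =
      (if i.val = 0 then ω ^ 2 + 1 else if i.val = (M+2) - 1 then 1 else 2) * x i
        - X (i.val + 1) - (if i.val = 0 then 0 else X (i.val - 1)) := by
    intro i
    have hsplit : ∀ j : Fin (M+2), A i j * x j =
        (if j = i then (if i.val = 0 then ω ^ 2 + 1 else if i.val = (M+2) - 1 then 1 else 2) * x j else 0)
        + (if i.val + 1 = j.val then -(x j) else 0)
        + (if j.val + 1 = i.val then -(x j) else 0) := by
      intro j
      rw [hA]
      rcases eq_or_ne i j with rfl | hij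
      · have h1 : ¬ (i.val + 1 = i.val) := by omega
        simp [h1]
      · have h2 : ¬ (j = i) := fun h => hij h.symm
        simp only [if_neg hij, if_neg h2, zero_add]
        by_cases h3 : i.val + 1 = j.val <;> by_cases h4 : j.val + 1 = i.val <;>
          first
            | omega
            | (simp [h3, h4]; try ring)
    have hmv : A.mulVec x i = ∑ j : Fin (M+2), A i j * x j := rfl
    rw [hmv, sum_congr rfl (fun j _ => hsplit j), sum_add_distrib, sum_add_distrib]
    have e1 : (∑ j : Fin (M+2), if j = i then (if i.val = 0 then ω ^ 2 + 1 else if i.val = (M+2) - 1 then 1 else 2) * x j else 0)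
        = (if i.val = 0 then ω ^ 2 + 1 else if i.val = (M+2) - 1 then 1 else 2) * x i := by
      rw [Finset.sum_ite_eq' univ i]; simp
    have e2 : (∑ j : Fin (M+2), if i.val + 1 = j.val then -(x j) else 0) = - X (i.val + 1) := by
      by_cases h : i.val + 1 < M+2
      · rw [hXv _ h]
        rw [Finset.sum_eq_single (⟨i.val+1, h⟩ : Fin (M+2))]
        · simp
        · intro j _ hj
          refine if_neg (fun hc => hj (Fin.ext ?_))
          simp only [Fin.val_mk]; omega
        · intro hmem; exact absurd (mem_univ _) hmem
      · rw [hX0 _ h]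
        rw [sum_eq_zero]; · simp
        intro j _
        exact if_neg (fun hc => h (by omega))
    have e3 : (∑ j : Fin (M+2), if j.val + 1 = i.val then -(x j) else 0)
        = - (if i.val = 0 then 0 else X (i.val - 1)) := by
      by_cases h : i.val = 0
      · rw [if_pos h, sum_eq_zero]; · simp
        intro j _
        exact if_neg (fun hc => by omega)
      · have hlt : i.val - 1 < M+2 := by omega
        rw [if_neg h, hXv _ hlt]
        rw [Finset.sum_eq_single (⟨i.val - 1, hlt⟩ : Fin (M+2))]
        · simp; omega
        · intro j _ hj
          refine if_neg (fun hc => hj (Fin.ext ?_))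
          simp only [Fin.val_mk]; omega
        · intro hmem; exact absurd (mem_univ _) hmem
    rw [e1, e2, e3]; ring
  have hdot : dotProduct x (A.mulVec x)
      = ∑ i ∈ range (M+2), ((fun t : ℕ =>
          ((if t = 0 then ω ^ 2 + 1 else if t = (M+2) - 1 then 1 else 2) * (X t)^2
            - X t * X (t + 1) - X t * (if t = 0 then 0 else X (t - 1)))) i) := by
    rw [dotProduct, ← Fin.sum_univ_eq_sum_range]
    refine sum_congr rfl fun i _ => ?_
    rw [hrow i]
    have hxi : x i = X i.val := by rw [hXv i.val i.isLt]
    beta_reduce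
    rw [hxi]
    ring
  rw [hdot]
  beta_reduce
  have hsplit2 : ∀ i ∈ range (M+2),
      ((if i = 0 then ω ^ 2 + 1 else if i = (M+2) - 1 then 1 else 2) * (X i)^2
          - X i * X (i + 1) - X i * (if i = 0 then 0 else X (i - 1)))
      = (2*(X i)^2 + (if i = 0 then (ω^2 - 1)*(X i)^2 else 0) + (if i = (M+2)-1 then -((X i)^2) else 0))
          - (X i * X (i + 1) + X i * (if i = 0 then 0 else X (i - 1))) := by
    intro i _
    rcases eq_or_ne i 0 with rfl | h0
    · have h1 : (0:ℕ) ≠ (M+2) - 1 := by omega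
      simp [h1]; ring
    · rcases eq_or_ne i ((M+2)-1) with h1 | h1
      · simp [h0, h1]; ring
      · have h1' : i ≠ M + 1 := by omega
        simp [h0, h1, h1']
        ring
  rw [sum_congr rfl hsplit2, sum_sub_distrib, sum_add_distrib, sum_add_distrib]
  have g1 : (∑ i ∈ range (M+2), if i = 0 then (ω^2 - 1)*(X i)^2 else 0) = (ω^2-1)*(X 0)^2 := by
    rw [Finset.sum_ite_eq' (range (M+2)) 0]
    rw [if_pos (mem_range.2 (by omega))]
  have g2 : (∑ i ∈ range (M+2), if i = (M+2)-1 then -((X i)^2) else 0) = -((X ((M+2)-1))^2) := by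
    rw [Finset.sum_ite_eq' (range (M+2)) ((M+2)-1)]
    rw [if_pos (mem_range.2 (by omega))]
  have g3 : (∑ i ∈ range (M+2), (X i * X (i+1) + X i * (if i = 0 then 0 else X (i-1))))
      = 2 * ∑ i ∈ range (M+1), X i * X (i+1) := by
    rw [sum_add_distrib]
    have g3a : (∑ i ∈ range (M+2), X i * X (i+1)) = ∑ i ∈ range (M+1), X i * X (i+1) := by
      rw [sum_range_succ, hX0 (M+1+1) (by omega)]
      ring
    have g3b : (∑ i ∈ range (M+2), X i * (if i = 0 then 0 else X (i-1)))
        = ∑ i ∈ range (M+1), X i * X (i+1) := by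
      rw [sum_range_succ']
      rw [sum_congr rfl (fun i (_ : i ∈ range (M+1)) =>
        show X (i+1) * (if i+1 = 0 then (0:ℝ) else X (i+1-1)) = X i * X (i+1) by
          rw [if_neg (Nat.succ_ne_zero i)]
          simp only [Nat.add_sub_cancel]
          ring)]
      simp
    rw [g3a, g3b]; ring
  rw [g1, g2, g3]
  have r1 : (∑ i ∈ range ((M+2)-1), (X i - X (i+1))^2)
      = (∑ i ∈ range (M+1), (X i)^2) + (∑ i ∈ range (M+1), (X (i+1))^2)
        - 2 * ∑ i ∈ range (M+1), X i * X (i+1) := by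
    rw [Finset.mul_sum, ← sum_add_distrib, ← sum_sub_distrib]
    exact sum_congr rfl fun i _ => by ring
  have s0 : (∑ i ∈ range (M+2), 2*(X i)^2) = 2 * ∑ i ∈ range (M+2), (X i)^2 :=
    (Finset.mul_sum _ _ _).symm
  have s1 : (∑ i ∈ range (M+2), (X i)^2) = (∑ i ∈ range (M+1), (X i)^2) + (X (M+1))^2 :=
    sum_range_succ _ _
  have s2 : (∑ i ∈ range (M+2), (X i)^2) = (∑ i ∈ range (M+1), (X (i+1))^2) + (X 0)^2 :=
    sum_range_succ' _ _
  have hm1 : (M+2) - 1 = M+1 := rfl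
  rw [hm1] at r1 ⊢
  rw [r1, s0]
  linear_combination s1 + s2

end Stmt16Aux
open Finset Stmt16Aux in
theorem stmt_16 (m n k : ℕ) (hn : 1 ≤ n) (hk1 : 1 ≤ k) (hkm : k < m)
    (L μ α q Δ ξ ω : ℝ) (hμ : 0 < μ) (hL : μ < L) (hΔ : 0 < Δ) (hα : 1 < α)
    (hq : q = (α - 1) / (α + 1)) (hq0 : 0 < q) (hq1 : q < 1)
    (hroot : q ^ 2 - (2 + 2 * n * μ / (L - μ)) * q + 1 = 0)
    (hω : ω = Real.sqrt (2 / (α + 1)))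
    (hξ : ξ = Real.sqrt (2 * Δ * n * (α + 1) ^ 2 / ((L - μ) * (α - 1))))
    (A : Matrix (Fin m) (Fin m) ℝ)
    (hA : ∀ i j : Fin m, A i j =
      if i = j then (if i.val = 0 then ω ^ 2 + 1 else if i.val = m - 1 then 1 else 2)
      else if i.val + 1 = j.val ∨ j.val + 1 = i.val then -1 else 0)
    (F : (Fin m → ℝ) → ℝ)
    (hF : ∀ x : Fin m → ℝ, F x =
      (L - μ) / (4 * n) * dotProduct x (A.mulVec x)
        + μ / 2 * ∑ j, x j ^ 2
        - (L - μ) / (n * (α + 1)) * ξ * x ⟨m - 1, by omega⟩) :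
    sInf (F '' {x | ∀ j : Fin m, j.val < m - k → x j = 0}) - sInf (Set.range F)
      = Δ * q ^ (2 * k) * (1 + q) / (1 + q ^ (2 * k + 1)) ∧
    Δ * q ^ (2 * k) ≤
      sInf (F '' {x | ∀ j : Fin m, j.val < m - k → x j = 0}) - sInf (Set.range F) := by
  obtain ⟨K, rfl⟩ : ∃ K, k = K + 1 := ⟨k - 1, by omega⟩
  obtain ⟨N, rfl⟩ : ∃ N, m = N + 2 := ⟨m - 2, by omega⟩
  have hKN : K ≤ N := by omega
  -- basic facts
  have hn' : (1:ℝ) ≤ (n:ℝ) := by exact_mod_cast hn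
  have hn0 : (n:ℝ) ≠ 0 := by linarith
  have hLμ : (0:ℝ) < L - μ := by linarith
  have hα0 : α + 1 ≠ 0 := by linarith
  have hα1 : (0:ℝ) < α - 1 := by linarith
  set c := (L - μ) / (4 * (n:ℝ)) with hc_def
  set b := (L - μ) / ((n:ℝ) * (α + 1)) * ξ with hb_def
  have hc : 0 < c := by rw [hc_def]; positivity
  -- key identities
  have key1 : ω^2 = 1 - q := by
    rw [hω, Real.sq_sqrt (by positivity), hq]; field_simp; norm_num
  have key2 : μ * q = 2*c*(1-q)^2 := by
    rw [hc_def]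
    field_simp at hroot
    field_simp
    linear_combination -2 * hroot
  have key3 : b = 2*c*ξ*(1-q) := by
    rw [hb_def, hc_def, hq]; field_simp; ring
  have key4 : c * ξ^2 * ((1-q)*q) = Δ := by
    rw [hc_def, hξ, Real.sq_sqrt (by positivity), hq]
    field_simp
    ring
  -- F in terms of Qf
  have hFQ : ∀ x : Fin (N+2) → ℝ, F x = Qf c μ b ω (N+2) (extF (N+2) x) := by
    intro x
    rw [hF x, quad_form (N+2) (by omega) ω A hA x]
    have e1 : (∑ j : Fin (N+2), x j ^ 2) = ∑ i ∈ range (N+2), (extF (N+2) x i)^2 := by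
      rw [← Fin.sum_univ_eq_sum_range (fun i => (extF (N+2) x i)^2) (N+2)]
      exact sum_congr rfl fun j _ => by simp [extF]
    have e2 : x ⟨N+2-1, by omega⟩ = extF (N+2) x (N+2-1) := by simp [extF]
    rw [e1, e2]
    unfold Qf Pf
    ring
  -- the global minimizer profile
  set g : ℕ → ℝ := fun i => ξ * q ^ (N + 2 - i) with hg
  have hLg : ∀ w : ℕ → ℝ, Lf c μ b ω (N+2) g w = 0 := by
    intro w
    apply lin_vanish
    · have hz : 2*c*ω^2*(g 0) + 2*c*(g 0 - g 1) + μ*(g 0) = 0 := by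
        simp only [hg]
        norm_num
        linear_combination (2*c*ξ*q^(N+2))*key1 + (ξ*q^(N+1))*key2
      rw [hz, zero_mul]
    · intro i hi
      have hi' : i < N := mem_range.1 hi
      have hz : 2*c*(2*g (i+1) - g i - g (i+2)) + μ * g (i+1) = 0 := by
        simp only [hg]
        have e0 : N + 2 - i = (N - i) + 2 := by omega
        have e1 : N + 2 - (i+1) = (N - i) + 1 := by omega
        have e2 : N + 2 - (i+2) = N - i := by omega
        rw [e0, e1, e2]
        linear_combination (ξ*q^(N-i))*key2
      rw [hz, zero_mul]
    · simp only [hg]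
      have e1 : N+2-(N+1) = 1 := by omega
      have e2 : N+2-N = 2 := by omega
      rw [e1, e2, key3]
      linear_combination ξ*key2
  have hQg : Qf c μ b ω (N+2) g = -Δ := by
    have h2 := Lf_self c μ b ω (N+2) g
    rw [hLg g] at h2
    have h3 : Qf c μ b ω (N+2) g = -(b * g (N+2-1))/2 := by
      unfold Qf; linarith [h2]
    rw [h3, key3]
    simp only [hg]
    have e1 : N+2-(N+2-1) = 1 := by omega
    rw [e1]
    linear_combination -key4
  -- global IsLeast
  have hgl : IsLeast (Set.range F) (-Δ) := by
    constructor
    · refine ⟨fun j => g j.val, ?_⟩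
      rw [hFQ, Qf_congr c μ b ω (N+2) _ g (by omega) (fun i hi => by simp [extF, hi]), hQg]
    · rintro y ⟨x, rfl⟩
      rw [hFQ x, expandQ c μ b ω (N+2) (extF (N+2) x) g, hQg, hLg]
      have := Pf_nonneg ω (N+2) (fun i => extF (N+2) x i - g i) hc.le hμ.le
      linarith
  -- restricted minimizer profile
  have hDpos : (0:ℝ) < 1 + q ^ (2*(K+1)+1) := by positivity
  have hD : (1:ℝ) + q ^ (2*(K+1)+1) ≠ 0 := ne_of_gt hDpos
  set D : ℝ := 1 + q ^ (2*(K+1)+1) with hDdef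
  set C2 : ℝ := ξ * q / D with hC2def
  have hC2 : C2 * D = ξ * q := by rw [hC2def]; field_simp
  set p := N - K with hp
  set h : ℕ → ℝ := fun j => if j < p then 0 else C2 * q^((K+1) - (j - p)) * (1 - q^(2*(j-p))) with hh
  have hh0 : ∀ j ≤ p, h j = 0 := by
    intro j hj
    rcases lt_or_eq_of_le hj with hj' | rfl
    · simp only [hh]; rw [if_pos hj']
    · simp only [hh]; rw [if_neg (lt_irrefl _)]; simp
  have hhval : ∀ j, p ≤ j → h j = C2 * q^((K+1) - (j - p)) * (1 - q^(2*(j-p))) := by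
    intro j hj; simp only [hh]; rw [if_neg (not_lt.2 hj)]
  have hLh : ∀ w : ℕ → ℝ, (∀ j ≤ p, w j = 0) → Lf c μ b ω (N+2) h w = 0 := by
    intro w hw
    apply lin_vanish
    · rw [hw 0 (Nat.zero_le _), mul_zero]
    · intro i hi
      have hi' : i < N := mem_range.1 hi
      by_cases hip : i + 1 ≤ p
      · rw [hw _ hip, mul_zero]
      · have hpi : p ≤ i := by omega
        have hfK : (i+1) - p ≤ K := by omega
        set f := i - p with hf
        set t := K - 1 - f with ht
        have hz : 2*c*(2*h (i+1) - h i - h (i+2)) + μ * h (i+1) = 0 := by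
          rw [hhval i hpi, hhval (i+1) (by omega), hhval (i+2) (by omega)]
          have e1 : (K+1) - (i - p) = t+2 := by omega
          have e2 : (K+1) - ((i+1) - p) = t+1 := by omega
          have e3 : (K+1) - ((i+2) - p) = t := by omega
          have e4 : 2*(i - p) = 2*f := by omega
          have e5 : 2*((i+1) - p) = 2*f+2 := by omega
          have e6 : 2*((i+2) - p) = 2*f+4 := by omega
          rw [e1, e2, e3, e4, e5, e6]
          linear_combination (C2 * q^t * (1 - q^(2*f+2))) * key2
        rw [hz, zero_mul]
    · have hv1 : h (N+1) = C2 * (1 - q^(2*(K+1))) := by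
        rw [hhval (N+1) (by omega)]
        have e1 : (N+1) - p = K+1 := by omega
        rw [e1]
        simp
      have hv2 : h N = C2 * q * (1 - q^(2*K)) := by
        rw [hhval N (by omega)]
        have e1 : N - p = K := by omega
        have e2 : (K+1) - K = 1 := by omega
        rw [e1, e2]
        ring
      have hgoal : D * (2*c*(h (N+1) - h N) + μ * h (N+1)) = D * b := by
        rw [hv1, hv2, key3, hDdef]
        linear_combination (2*c*((1-q^(2*K+2)) - q*(1-q^(2*K))) + μ*(1-q^(2*K+2))) * hC2
          + (ξ*(1-q^(2*K+2))) * key2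
      exact mul_left_cancel₀ hD hgoal
  have hQh : Qf c μ b ω (N+2) h = -Δ * (1 - q^(2*(K+1))) / D := by
    have h2 := Lf_self c μ b ω (N+2) h
    rw [hLh h (fun j hj => hh0 j hj)] at h2
    have h3 : Qf c μ b ω (N+2) h = -(b * h (N+2-1))/2 := by
      unfold Qf; linarith [h2]
    rw [h3]
    have hv1 : h (N+2-1) = C2 * (1 - q^(2*(K+1))) := by
      rw [hhval (N+2-1) (by omega)]
      have e1 : (N+2-1) - p = K+1 := by omega
      rw [e1]
      simp
    rw [hv1, key3, eq_div_iff hD]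
    linear_combination (-(c*ξ*(1-q)*(1 - q^(2*(K+1))))) * hC2 + (-(1 - q^(2*(K+1)))) * key4
  -- restricted IsLeast
  have hmember : (fun j : Fin (N+2) => h j.val) ∈ {x : Fin (N+2) → ℝ | ∀ j : Fin (N+2), j.val < (N+2) - (K+1) → x j = 0} := by
    intro j hj
    exact hh0 j.val (by omega)
  have hrl : IsLeast (F '' {x : Fin (N+2) → ℝ | ∀ j : Fin (N+2), j.val < (N+2) - (K+1) → x j = 0})
      (-Δ * (1 - q^(2*(K+1))) / D) := by
    constructor
    · refine ⟨fun j : Fin (N+2) => h j.val, hmember, ?_⟩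
      rw [hFQ, Qf_congr c μ b ω (N+2) _ h (by omega) (fun i hi => by simp [extF, hi]), hQh]
    · rintro y ⟨x, hxS, rfl⟩
      rw [hFQ x, expandQ c μ b ω (N+2) (extF (N+2) x) h, hQh]
      have hLz : Lf c μ b ω (N+2) h (fun i => extF (N+2) x i - h i) = 0 := by
        apply hLh
        intro j hj
        have hjm : j < N+2 := by omega
        have : extF (N+2) x j = 0 := by
          simp only [extF, dif_pos hjm]
          exact hxS ⟨j, hjm⟩ (by simpa using by omega)
        rw [this, hh0 j hj]
        ring
      rw [hLz]
      have := Pf_nonneg ω (N+2) (fun i => extF (N+2) x i - h i) hc.le hμ.le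
      linarith
  -- conclude
  rw [hrl.csInf_eq, hgl.csInf_eq]
  have hmain : -Δ * (1 - q^(2*(K+1))) / D - (-Δ)
      = Δ * q ^ (2 * (K+1)) * (1 + q) / (1 + q ^ (2 * (K+1) + 1)) := by
    rw [hDdef]
    field_simp
    ring
  constructor
  · exact hmain
  · rw [hmain, le_div_iff₀ hDpos]
    have hqk : q ^ (2*(K+1)+1) ≤ q := by
      simpa using pow_le_pow_of_le_one hq0.le hq1.le (show 1 ≤ 2*(K+1)+1 by omega)
    exact mul_le_mul_of_nonneg_left (by linarith) (by positivity)
end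

section
/- Let c = p1 + p2 with 0 < p1 ≤ p2 ≤ 1, c < 2, and fix an integer j ≥ 2. Define f(p) = (( c - p)(1-p)^j - p(1+p-c)^j)/(c - 2p) for 0 < p < c/2. Then f is strictly decreasing on (0, c/2). -/
theorem stmt_17 (p1 p2 c : ℝ) (h1 : 0 < p1) (h12 : p1 ≤ p2) (h2 : p2 ≤ 1)
    (hc : c = p1 + p2) (hc2 : c < 2) (j : ℕ) (hj : 2 ≤ j) :
    StrictAntiOn
      (fun p : ℝ => ((c - p) * (1 - p) ^ j - p * (1 + p - c) ^ j) / (c - 2 * p))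
      (Set.Ioo 0 (c / 2)) := by
  obtain ⟨m, rfl⟩ : ∃ m, j = m + 2 := ⟨j - 2, by omega⟩
  have hc0 : 0 < c := by linarith
  apply strictAntiOn_of_deriv_neg (convex_Ioo 0 (c / 2))
  · apply ContinuousOn.div (by fun_prop) (by fun_prop)
    intro x hx
    have hx2 : x < c / 2 := hx.2
    have h : (0:ℝ) < c - 2 * x := by linarith
    exact ne_of_gt h
  · intro x hx
    rw [interior_Ioo] at hx
    obtain ⟨hx0, hxc⟩ := hx
    have ha0 : (0:ℝ) < 1 - x := by linarith
    have hv0 : (0:ℝ) < c - 2 * x := by linarith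
    have hb_lt : 1 + x - c < 1 - x := by linarith
    have habs : |1 + x - c| < 1 - x := abs_lt.mpr ⟨by linarith, hb_lt⟩
    -- derivative computation
    have h1d : HasDerivAt (fun p : ℝ => 1 - p) (-1 : ℝ) x := by
      simpa using (hasDerivAt_id x).const_sub (1:ℝ)
    have h2d := h1d.pow (m + 2)
    have h3d : HasDerivAt (fun p : ℝ => c - p) (-1 : ℝ) x := by
      simpa using (hasDerivAt_id x).const_sub c
    have h4d := h3d.mul h2d
    have h5d : HasDerivAt (fun p : ℝ => 1 + p - c) (1 : ℝ) x := by
      simpa using ((hasDerivAt_id x).const_add (1:ℝ)).sub_const c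
    have h6d := h5d.pow (m + 2)
    have h7d := (hasDerivAt_id x).mul h6d
    have h8d := h4d.sub h7d
    have h9d : HasDerivAt (fun p : ℝ => c - 2 * p) (-2 : ℝ) x := by
      simpa using ((hasDerivAt_id x).const_mul (2:ℝ)).const_sub c
    have h10d := h8d.div h9d (ne_of_gt hv0)
    have hEq : deriv (fun p : ℝ =>
          ((c - p) * (1 - p) ^ (m + 2) - p * (1 + p - c) ^ (m + 2)) / (c - 2 * p)) x
        = (((-1 * (1 - x) ^ (m + 2) + (c - x) * (↑(m + 2) * (1 - x) ^ (m + 2 - 1) * -1))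
            - (1 * (1 + x - c) ^ (m + 2) + x * (↑(m + 2) * (1 + x - c) ^ (m + 2 - 1) * 1))) * (c - 2 * x)
            - ((c - x) * (1 - x) ^ (m + 2) - x * (1 + x - c) ^ (m + 2)) * (-2)) / (c - 2 * x) ^ 2 :=
      h10d.deriv
    have hbk : ∀ k : ℕ, (1 + x - c) ^ k ≤ (1 - x) ^ k := fun k =>
      calc (1 + x - c) ^ k ≤ |(1 + x - c) ^ k| := le_abs_self _
        _ = |1 + x - c| ^ k := abs_pow _ _
        _ ≤ (1 - x) ^ k := pow_le_pow_left₀ (abs_nonneg _) habs.le k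
    have hterm : ∀ k : ℕ, 0 < (c - x) * (1 - x) ^ k - x * (1 + x - c) ^ k := by
      intro k
      have hk1 : x * (1 + x - c) ^ k ≤ x * (1 - x) ^ k :=
        mul_le_mul_of_nonneg_left (hbk k) hx0.le
      have hk2 : 0 < (c - 2 * x) * (1 - x) ^ k := mul_pos hv0 (pow_pos ha0 k)
      nlinarith [hk1, hk2]
    have hPpos : 0 < ∑ k ∈ Finset.range (m + 2),
        ((1 - x) ^ k - (1 + x - c) ^ k) *
          ((c - x) * (1 - x) ^ (m + 1 - k) - x * (1 + x - c) ^ (m + 1 - k)) := by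
      apply Finset.sum_pos'
      · intro k _
        exact mul_nonneg (by linarith [hbk k]) (hterm _).le
      · refine ⟨1, Finset.mem_range.mpr (by omega), ?_⟩
        apply mul_pos ?_ (hterm _)
        simp only [pow_one]
        linarith
    have hstep : ∀ k ∈ Finset.range (m + 2),
        ((1 - x) ^ k - (1 + x - c) ^ k) *
            ((c - x) * (1 - x) ^ (m + 1 - k) - x * (1 + x - c) ^ (m + 1 - k))
          = ((c - x) * (1 - x) ^ (m + 1) + x * (1 + x - c) ^ (m + 1))
            - ((c - x) * ((1 - x) ^ (m + 1 - k) * (1 + x - c) ^ k)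
              + x * ((1 - x) ^ k * (1 + x - c) ^ (m + 1 - k))) := by
      intro k hk
      simp only [Finset.mem_range] at hk
      have e1 : (1 - x) ^ k * (1 - x) ^ (m + 1 - k) = (1 - x) ^ (m + 1) := by
        rw [← pow_add]; congr 1; omega
      have e2 : (1 + x - c) ^ k * (1 + x - c) ^ (m + 1 - k) = (1 + x - c) ^ (m + 1) := by
        rw [← pow_add]; congr 1; omega
      linear_combination (c - x) * e1 + x * e2
    have hrefl : ∑ k ∈ Finset.range (m + 2), (1 - x) ^ (m + 1 - k) * (1 + x - c) ^ k
        = ∑ k ∈ Finset.range (m + 2), (1 - x) ^ k * (1 + x - c) ^ (m + 1 - k) := by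
      rw [← Finset.sum_range_reflect (fun k => (1 - x) ^ k * (1 + x - c) ^ (m + 1 - k)) (m + 2)]
      refine Finset.sum_congr rfl fun k hk => ?_
      simp only [Finset.mem_range] at hk
      simp only [show m + 2 - 1 = m + 1 from rfl]
      rw [show m + 1 - (m + 1 - k) = k from by omega]
    have hnum : ((-1 * (1 - x) ^ (m + 2) + (c - x) * (↑(m + 2) * (1 - x) ^ (m + 2 - 1) * -1))
            - (1 * (1 + x - c) ^ (m + 2) + x * (↑(m + 2) * (1 + x - c) ^ (m + 2 - 1) * 1))) * (c - 2 * x)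
            - ((c - x) * (1 - x) ^ (m + 2) - x * (1 + x - c) ^ (m + 2)) * (-2)
        = -((c - 2 * x) * ∑ k ∈ Finset.range (m + 2),
            ((1 - x) ^ k - (1 + x - c) ^ k) *
              ((c - x) * (1 - x) ^ (m + 1 - k) - x * (1 + x - c) ^ (m + 1 - k))) := by
      rw [Finset.sum_congr rfl hstep, Finset.sum_sub_distrib, Finset.sum_const,
        Finset.card_range, nsmul_eq_mul, Finset.sum_add_distrib, ← Finset.mul_sum,
        ← Finset.mul_sum, hrefl]
      have hg := geom_sum₂_mul (1 - x) (1 + x - c) (m + 2)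
      rw [show m + 2 - 1 = m + 1 from rfl] at hg
      rw [show m + 2 - 1 = m + 1 from rfl]
      push_cast
      linear_combination (-c) * hg
    rw [hEq, hnum]
    apply div_neg_of_neg_of_pos
    · exact neg_lt_zero.mpr (mul_pos hv0 hPpos)
    · exact pow_pos hv0 2
end

section
/- Let X1, X2 be independent geometric random variables with success probabilities p1, p2 ∈ (0,1], and Y1, Y2 independent geometric random variables with success probability (p1+p2)/2, all independent of a random variable Z taking nonnegative integer values. Then for any positive integer j, P(Z + X1 + X2 > j) ≥ P(Z + Y1 + Y2 > j). -/
open MeasureTheory ProbabilityTheory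

namespace Stmt18Aux

/-- geometric pmf -/
noncomputable def gf (p : ℝ) (k : ℕ) : ℝ := if k = 0 then 0 else (1 - p) ^ (k - 1) * p

noncomputable def hpoly (q1 q2 : ℝ) (k : ℕ) : ℝ :=
  ∑ i ∈ Finset.range (k + 1), q1 ^ i * q2 ^ (k - i)

lemma hpoly_succ (q1 q2 : ℝ) (k : ℕ) :
    hpoly q1 q2 (k + 1) = q1 * hpoly q1 q2 k + q2 ^ (k + 1) := by
  unfold hpoly
  rw [Finset.sum_range_succ', Finset.mul_sum]
  simp only [pow_zero, one_mul, Nat.sub_zero, Nat.succ_sub_succ]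
  congr 1
  exact Finset.sum_congr rfl fun i _ => by ring

lemma hpoly_symm (q1 q2 : ℝ) (k : ℕ) : hpoly q1 q2 k = hpoly q2 q1 k := by
  unfold hpoly
  rw [← Finset.sum_range_reflect]
  refine Finset.sum_congr rfl fun i hi => ?_
  rw [Finset.mem_range] at hi
  have h1 : k + 1 - 1 - i = k - i := by omega
  have h2 : k - (k - i) = i := by omega
  rw [h1, h2, mul_comm]

lemma hpoly_succ' (q1 q2 : ℝ) (k : ℕ) :
    hpoly q1 q2 (k + 1) = q2 * hpoly q1 q2 k + q1 ^ (k + 1) := by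
  rw [hpoly_symm q1 q2, hpoly_succ, hpoly_symm q2 q1]

lemma hpoly_succ_avg (q1 q2 : ℝ) (k : ℕ) :
    hpoly q1 q2 (k + 1)
      = ((q1 + q2) / 2) * hpoly q1 q2 k + (q1 ^ (k + 1) + q2 ^ (k + 1)) / 2 := by
  have r1 := hpoly_succ q1 q2 k
  have r2 := hpoly_succ' q1 q2 k
  linear_combination (r1 + r2) / 2

lemma avg_pow (a b : ℝ) (ha : 0 ≤ a) (hb : 0 ≤ b) (n : ℕ) :
    ((a + b) / 2) ^ n ≤ (a ^ n + b ^ n) / 2 := by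
  have h := (convexOn_pow n).2 (Set.mem_Ici.mpr ha) (Set.mem_Ici.mpr hb)
    (by norm_num : (0:ℝ) ≤ 1/2) (by norm_num : (0:ℝ) ≤ 1/2) (by norm_num)
  simp only [smul_eq_mul] at h
  have e : (a + b) / 2 = 1/2 * a + 1/2 * b := by ring
  rw [e]
  linarith [h]

lemma hpoly_mono (q1 q2 : ℝ) (h1 : 0 ≤ q1) (h2 : 0 ≤ q2) (k : ℕ) :
    hpoly ((q1 + q2) / 2) ((q1 + q2) / 2) k ≤ hpoly q1 q2 k := by
  induction k with
  | zero => simp [hpoly]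
  | succ k ih =>
    have hq : 0 ≤ (q1 + q2) / 2 := by linarith
    have e := avg_pow q1 q2 h1 h2 (k + 1)
    have hm := mul_le_mul_of_nonneg_left ih hq
    calc hpoly ((q1 + q2) / 2) ((q1 + q2) / 2) (k + 1)
        = ((q1 + q2) / 2) * hpoly ((q1 + q2) / 2) ((q1 + q2) / 2) k
            + ((q1 + q2) / 2) ^ (k + 1) := by
          rw [hpoly_succ]
      _ ≤ ((q1 + q2) / 2) * hpoly q1 q2 k + (q1 ^ (k + 1) + q2 ^ (k + 1)) / 2 := by
          exact add_le_add hm e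
      _ = hpoly q1 q2 (k + 1) := (hpoly_succ_avg q1 q2 k).symm

lemma main_alg (q1 q2 : ℝ) (h1 : 0 ≤ q1) (h2 : 0 ≤ q2) (hs : q1 + q2 ≤ 2) (M : ℕ) :
    ((q1 + q2) / 2) ^ (M + 1)
        + (1 - (q1 + q2) / 2) * hpoly ((q1 + q2) / 2) ((q1 + q2) / 2) M
      ≤ q1 ^ (M + 1) + (1 - q1) * hpoly q1 q2 M := by
  have r1 := hpoly_succ q1 q2 M
  have r2 := hpoly_succ' q1 q2 M
  have d0 := hpoly_mono q1 q2 h1 h2 M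
  have e := avg_pow q1 q2 h1 h2 (M + 1)
  have key : q1 ^ (M + 1) + (1 - q1) * hpoly q1 q2 M
      - (((q1 + q2) / 2) ^ (M + 1)
          + (1 - (q1 + q2) / 2) * hpoly ((q1 + q2) / 2) ((q1 + q2) / 2) M)
      = ((q1 ^ (M + 1) + q2 ^ (M + 1)) / 2 - ((q1 + q2) / 2) ^ (M + 1))
        + (1 - (q1 + q2) / 2)
            * (hpoly q1 q2 M - hpoly ((q1 + q2) / 2) ((q1 + q2) / 2) M) := by
    linear_combination (r1 - r2) / 2
  have hnn : 0 ≤ (1 - (q1 + q2) / 2)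
      * (hpoly q1 q2 M - hpoly ((q1 + q2) / 2) ((q1 + q2) / 2) M) :=
    mul_nonneg (by linarith) (by linarith)
  linarith

lemma main_alg' (p1 p2 : ℝ) (h1 : p1 ≤ 1) (h2 : p2 ≤ 1) (h3 : 0 ≤ p1 + p2) (M : ℕ) :
    (1 - (p1 + p2) / 2) ^ (M + 1)
        + ((p1 + p2) / 2) * hpoly (1 - (p1 + p2) / 2) (1 - (p1 + p2) / 2) M
      ≤ (1 - p1) ^ (M + 1) + p1 * hpoly (1 - p1) (1 - p2) M := by
  have e : (1:ℝ) - (p1 + p2) / 2 = ((1 - p1) + (1 - p2)) / 2 := by ring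
  have ec : (p1 + p2) / 2 = 1 - ((1 - p1) + (1 - p2)) / 2 := by ring
  have ep : p1 = 1 - (1 - p1) := by ring
  rw [e, ec]
  nth_rewrite 6 [ep]
  exact main_alg (1 - p1) (1 - p2) (by linarith) (by linarith) (by linarith) M

lemma geom_p (p : ℝ) (n : ℕ) :
    ∑ i ∈ Finset.range n, (1 - p) ^ i * p = 1 - (1 - p) ^ n := by
  induction n with
  | zero => simp
  | succ n ih => rw [Finset.sum_range_succ, ih]; ring

lemma sum_gf (p : ℝ) (n : ℕ) :
    ∑ b ∈ Finset.range (n + 1), gf p b = 1 - (1 - p) ^ n := by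
  rw [Finset.sum_range_succ']
  have h0 : gf p 0 = 0 := by simp [gf]
  have h1 : ∀ b, gf p (b + 1) = (1 - p) ^ b * p := by
    intro b; simp [gf]
  rw [h0, add_zero]
  rw [Finset.sum_congr rfl fun b _ => h1 b]
  exact geom_p p n

lemma closed (p1 p2 : ℝ) (M : ℕ) :
    ∑ a ∈ Finset.range (M + 1 + 1), gf p1 a * ∑ b ∈ Finset.range (M + 1 - a + 1), gf p2 b
      = 1 - (1 - p1) ^ (M + 1) - p1 * hpoly (1 - p1) (1 - p2) M := by
  rw [Finset.sum_range_succ']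
  have h0 : gf p1 0 = 0 := by simp [gf]
  rw [h0, zero_mul, add_zero]
  have hterm : ∀ a ∈ Finset.range (M + 1),
      gf p1 (a + 1) * ∑ b ∈ Finset.range (M + 1 - (a + 1) + 1), gf p2 b
        = (1 - p1) ^ a * p1 - p1 * ((1 - p1) ^ a * (1 - p2) ^ (M - a)) := by
    intro a ha
    rw [Finset.mem_range] at ha
    have hr : M + 1 - (a + 1) + 1 = M - a + 1 := by omega
    rw [hr, sum_gf]
    have h1 : gf p1 (a + 1) = (1 - p1) ^ a * p1 := by simp [gf]
    rw [h1]; ring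
  rw [Finset.sum_congr rfl hterm, Finset.sum_sub_distrib, geom_p, ← Finset.mul_sum]
  rfl

lemma core (p1 p2 : ℝ) (hp1 : 0 < p1) (hp1' : p1 ≤ 1) (hp2 : 0 < p2) (hp2' : p2 ≤ 1)
    (m : ℕ) :
    ∑ a ∈ Finset.range (m + 1), gf p1 a * ∑ b ∈ Finset.range (m - a + 1), gf p2 b
      ≤ ∑ a ∈ Finset.range (m + 1),
          gf ((p1 + p2) / 2) a * ∑ b ∈ Finset.range (m - a + 1), gf ((p1 + p2) / 2) b := by
  cases m with
  | zero => simp [gf]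
  | succ M =>
    rw [closed p1 p2 M, closed ((p1 + p2) / 2) ((p1 + p2) / 2) M]
    have h := main_alg' p1 p2 hp1' hp2' (by linarith) M
    have e : ((p1 + p2) / 2 + (p1 + p2) / 2) / 2 = (p1 + p2) / 2 := by ring
    linarith [h]

end Stmt18Aux

section MeasureAux

open Stmt18Aux

variable {Ω : Type*} [MeasureSpace Ω] [IsProbabilityMeasure (ℙ : Measure Ω)]

lemma partition_le (V : Ω → ℕ) (hV : Measurable V) (n : ℕ) :
    ℙ {ω | V ω ≤ n} = ∑ b ∈ Finset.range (n + 1), ℙ {ω | V ω = b} := by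
  have hset : {ω | V ω ≤ n} = ⋃ b ∈ Finset.range (n + 1), {ω | V ω = b} := by
    ext ω
    simp only [Set.mem_setOf_eq, Set.mem_iUnion, Finset.mem_range, exists_prop]
    constructor
    · intro h; exact ⟨V ω, by omega, rfl⟩
    · rintro ⟨b, hb, h⟩; omega
  rw [hset, measure_biUnion_finset]
  · intro b _ c _ hbc
    exact Set.disjoint_left.mpr fun ω h1 h2 => hbc (h1.symm.trans h2)
  · exact fun b _ => hV (measurableSet_singleton b)

lemma add_decomp (W V : Ω → ℕ) (hW : Measurable W) (hV : Measurable V)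
    (hind : IndepFun W V ℙ) (j : ℕ) :
    ℙ {ω | W ω + V ω ≤ j}
      = ∑ z ∈ Finset.range (j + 1), ℙ {ω | W ω = z} * ℙ {ω | V ω ≤ j - z} := by
  have hset : {ω | W ω + V ω ≤ j}
      = ⋃ z ∈ Finset.range (j + 1), ({ω | W ω = z} ∩ {ω | V ω ≤ j - z}) := by
    ext ω
    simp only [Set.mem_setOf_eq, Set.mem_iUnion, Finset.mem_range, Set.mem_inter_iff,
      exists_prop]
    constructor
    · intro h; exact ⟨W ω, by omega, rfl, by omega⟩
    · rintro ⟨z, hz, h1, h2⟩; omega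
  rw [hset, measure_biUnion_finset]
  · refine Finset.sum_congr rfl fun z _ => ?_
    have h := hind.measure_inter_preimage_eq_mul (s := {z}) (t := Set.Iic (j - z))
      (measurableSet_singleton z) measurableSet_Iic
    exact h
  · intro b _ c _ hbc
    exact Set.disjoint_left.mpr fun ω h1 h2 => hbc (h1.1.symm.trans h2.1)
  · intro z _
    exact (hW (measurableSet_singleton z)).inter (hV measurableSet_Iic)

end MeasureAux

open Stmt18Aux

theorem stmt_18 {Ω : Type*} [MeasureSpace Ω] [IsProbabilityMeasure (ℙ : Measure Ω)]
    (Z X1 X2 Y1 Y2 : Ω → ℕ)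
    (hZm : Measurable Z) (hX1m : Measurable X1) (hX2m : Measurable X2)
    (hY1m : Measurable Y1) (hY2m : Measurable Y2)
    (p1 p2 : ℝ) (hp1 : 0 < p1) (hp1' : p1 ≤ 1) (hp2 : 0 < p2) (hp2' : p2 ≤ 1)
    (hlaw1 : ∀ k : ℕ, (ℙ {ω | X1 ω = k}).toReal =
      if k = 0 then 0 else (1 - p1) ^ (k - 1) * p1)
    (hlaw2 : ∀ k : ℕ, (ℙ {ω | X2 ω = k}).toReal =
      if k = 0 then 0 else (1 - p2) ^ (k - 1) * p2)
    (hlawY1 : ∀ k : ℕ, (ℙ {ω | Y1 ω = k}).toReal =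
      if k = 0 then 0 else (1 - (p1 + p2) / 2) ^ (k - 1) * ((p1 + p2) / 2))
    (hlawY2 : ∀ k : ℕ, (ℙ {ω | Y2 ω = k}).toReal =
      if k = 0 then 0 else (1 - (p1 + p2) / 2) ^ (k - 1) * ((p1 + p2) / 2))
    (hindepX : iIndepFun ![Z, X1, X2] ℙ)
    (hindepY : iIndepFun ![Z, Y1, Y2] ℙ)
    (j : ℕ) (hj : 1 ≤ j) :
    ℙ {ω | j < Z ω + Y1 ω + Y2 ω} ≤ ℙ {ω | j < Z ω + X1 ω + X2 ω} := by
  have hmX : ∀ i, Measurable (![Z, X1, X2] i) := by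
    intro i; fin_cases i <;> simpa
  have hmY : ∀ i, Measurable (![Z, Y1, Y2] i) := by
    intro i; fin_cases i <;> simpa
  have hX12 : IndepFun X1 X2 ℙ := by
    have := hindepX.indepFun (i := 1) (j := 2) (by decide)
    simpa using this
  have hY12 : IndepFun Y1 Y2 ℙ := by
    have := hindepY.indepFun (i := 1) (j := 2) (by decide)
    simpa using this
  have hZX : IndepFun Z (X1 + X2) ℙ := by
    have := hindepX.indepFun_add_right hmX 0 1 2 (by decide) (by decide)
    simpa using this
  have hZY : IndepFun Z (Y1 + Y2) ℙ := by
    have := hindepY.indepFun_add_right hmY 0 1 2 (by decide) (by decide)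
    simpa using this
  -- evaluation of the cdf of a sum of independent variables with known pmfs
  have eval : ∀ (W V : Ω → ℕ), Measurable W → Measurable V → IndepFun W V ℙ →
      ∀ (pW pV : ℝ), (∀ k, (ℙ {ω | W ω = k}).toReal = gf pW k) →
      (∀ k, (ℙ {ω | V ω = k}).toReal = gf pV k) → ∀ m : ℕ,
      (ℙ {ω | W ω + V ω ≤ m}).toReal
        = ∑ a ∈ Finset.range (m + 1), gf pW a * ∑ b ∈ Finset.range (m - a + 1), gf pV b := by
    intro W V hW hV hind pW pV hlW hlV m
    rw [add_decomp W V hW hV hind m,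
      ENNReal.toReal_sum (fun a _ => ENNReal.mul_ne_top (measure_ne_top _ _) (measure_ne_top _ _))]
    refine Finset.sum_congr rfl fun a _ => ?_
    rw [ENNReal.toReal_mul, hlW a, partition_le V hV (m - a),
      ENNReal.toReal_sum (fun b _ => measure_ne_top _ _)]
    congr 1
    exact Finset.sum_congr rfl fun b _ => hlV b
  have keyXY : ∀ m : ℕ, ℙ {ω | X1 ω + X2 ω ≤ m} ≤ ℙ {ω | Y1 ω + Y2 ω ≤ m} := by
    intro m
    rw [← ENNReal.toReal_le_toReal (measure_ne_top _ _) (measure_ne_top _ _)]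
    rw [eval X1 X2 hX1m hX2m hX12 p1 p2 (fun k => (hlaw1 k).trans rfl)
        (fun k => (hlaw2 k).trans rfl) m,
      eval Y1 Y2 hY1m hY2m hY12 ((p1 + p2) / 2) ((p1 + p2) / 2)
        (fun k => (hlawY1 k).trans rfl) (fun k => (hlawY2 k).trans rfl) m]
    exact core p1 p2 hp1 hp1' hp2 hp2' m
  have hXs : ℙ {ω | Z ω + X1 ω + X2 ω ≤ j} ≤ ℙ {ω | Z ω + Y1 ω + Y2 ω ≤ j} := by
    have e1 : {ω | Z ω + X1 ω + X2 ω ≤ j} = {ω | Z ω + (X1 + X2) ω ≤ j} := by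
      ext ω; simp [Pi.add_apply, add_assoc]
    have e2 : {ω | Z ω + Y1 ω + Y2 ω ≤ j} = {ω | Z ω + (Y1 + Y2) ω ≤ j} := by
      ext ω; simp [Pi.add_apply, add_assoc]
    rw [e1, e2, add_decomp Z (X1 + X2) hZm (hX1m.add hX2m) hZX j,
      add_decomp Z (Y1 + Y2) hZm (hY1m.add hY2m) hZY j]
    refine Finset.sum_le_sum fun z _ => ?_
    exact mul_le_mul_right (keyXY (j - z)) _
  have c1 : {ω | j < Z ω + Y1 ω + Y2 ω} = {ω | Z ω + Y1 ω + Y2 ω ≤ j}ᶜ := by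
    ext ω; simp [not_le]
  have c2 : {ω | j < Z ω + X1 ω + X2 ω} = {ω | Z ω + X1 ω + X2 ω ≤ j}ᶜ := by
    ext ω; simp [not_le]
  have hm1 : MeasurableSet {ω | Z ω + Y1 ω + Y2 ω ≤ j} :=
    ((hZm.add hY1m).add hY2m) measurableSet_Iic
  have hm2 : MeasurableSet {ω | Z ω + X1 ω + X2 ω ≤ j} :=
    ((hZm.add hX1m).add hX2m) measurableSet_Iic
  rw [c1, c2, prob_compl_eq_one_sub hm1, prob_compl_eq_one_sub hm2]
  exact tsub_le_tsub_left hXs 1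
end

section
/- Let λ1, λ2 be positive reals with λ2 < (2+2√2)λ1 and λ3 > 0. If the system λ1·z1 + λ3(z1 - z2) + λ2·z1²(z1-1)/(1+z1²) = 0 and λ1·z2 + λ3(z2 - z1) + λ2·z2²(z2-1)/(1+z2²) = 0 has a solution with z1·z2 ≠ 0, then both z2/z1 > 1 and z1/z2 > 1 hold, a contradiction; hence no such solution exists. -/
theorem stmt_19 (lam1 lam2 lam3 : ℝ) (h1 : 0 < lam1) (h2 : 0 < lam2)
    (h3 : lam2 < (2 + 2 * Real.sqrt 2) * lam1) (h4 : 0 < lam3) :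
    ¬ ∃ z1 z2 : ℝ, z1 * z2 ≠ 0 ∧
      lam1 * z1 + lam3 * (z1 - z2) + lam2 * (z1 ^ 2 * (z1 - 1) / (1 + z1 ^ 2)) = 0 ∧
      lam1 * z2 + lam3 * (z2 - z1) + lam2 * (z2 ^ 2 * (z2 - 1) / (1 + z2 ^ 2)) = 0 := by
  rintro ⟨z1, z2, hne, e1, e2⟩
  have hz1 : z1 ≠ 0 := fun h => hne (by simp [h])
  have hz2 : z2 ≠ 0 := fun h => hne (by simp [h])
  set s := Real.sqrt 2 with hs
  have hs2 : s ^ 2 = 2 := Real.sq_sqrt (by norm_num)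
  have hs0 : (0:ℝ) ≤ s := Real.sqrt_nonneg 2
  have hA : 0 < lam1 - lam2 * (s - 1) / 2 := by nlinarith
  have key : ∀ z : ℝ, 0 < lam1 * (1 + z ^ 2) + lam2 * (z * (z - 1)) := by
    intro z
    have hpos : (0:ℝ) < 1 + z ^ 2 := by positivity
    nlinarith [mul_pos hA hpos, mul_nonneg h2.le (sq_nonneg ((s + 1) * z - 1))]
  have d1 : (0:ℝ) < 1 + z1 ^ 2 := by positivity
  have d2 : (0:ℝ) < 1 + z2 ^ 2 := by positivity
  have h1' := e1
  have h2' := e2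
  field_simp at h1' h2'
  have E1 : lam3 * (z2 - z1) * (1 + z1 ^ 2) = z1 * (lam1 * (1 + z1 ^ 2) + lam2 * (z1 * (z1 - 1))) := by
    linear_combination -h1'
  have E2 : lam3 * (z1 - z2) * (1 + z2 ^ 2) = z2 * (lam1 * (1 + z2 ^ 2) + lam2 * (z2 * (z2 - 1))) := by
    linear_combination -h2'
  have P1 := key z1
  have P2 := key z2
  rcases hz1.lt_or_gt with hneg | hpos
  · -- z1 < 0 : then z2 < z1 < 0, but then z1 - z2 > 0 while RHS of E2 < 0
    have h12 : z2 < z1 := by nlinarith [mul_pos h4 d1, mul_pos (neg_pos.mpr hneg) P1]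
    nlinarith [mul_pos h4 d2, mul_pos (neg_pos.mpr (h12.trans hneg)) P2]
  · have h12 : z1 < z2 := by nlinarith [mul_pos h4 d1, mul_pos hpos P1]
    nlinarith [mul_pos h4 d2, mul_pos (hpos.trans h12) P2]
end
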